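/- arXiv:math/0412361 — 2 statements merged into one kernel-verified Lean document; each statement's English description precedes it below -/
import Mathlib

section
/- Let W ⊆ D_j, dim_K W = t ≥ 2, V ⊂ W of codimension one, A = R/Ann(W), B_V = R/Ann(V), and C the kernel of the natural surjection A → B_V. Then the reversed Hilbert function of C, given by (H(C)ˆ)_i = H(C)_{j−i}, is an O-sequence: it is the Hilbert function of some standard graded Artinian K-algebra. -/
open MvPolynomial

/-- The partial derivative endomorphisms commute. -/
theorem pderiv_endo_comm {K : Type*} [CommSemiring K] {r : ℕ} (i j : Fin r)
    (p : MvPolynomial (Fin r) K) :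
    pderiv i (pderiv j p) = pderiv j (pderiv i p) := by
  induction p using MvPolynomial.induction_on with
  | C a => simp
  | add p q hp hq => simp [hp, hq]
  | mul_X p k hp =>
      have hX : ∀ a b c : Fin r,
          pderiv a (pderiv b (X c : MvPolynomial (Fin r) K)) = 0 := by
        intro a b c
        rcases eq_or_ne c b with h | h
        · subst h; rw [pderiv_X_self]; exact pderiv_one
        · rw [pderiv_X_of_ne h, map_zero]
      simp only [pderiv_mul, map_add, pderiv_mul, hp, hX]
      ring

/-- The apolarity action of `R = K[x_1,…,x_r]` on `D = K[X_1,…,X_r]` by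
partial differentiation, as an algebra map to endomorphisms. -/
noncomputable def apolHom (K : Type*) [CommSemiring K] (r : ℕ) :
    MvPolynomial (Fin r) K →ₐ[K] Module.End K (MvPolynomial (Fin r) K) :=
  letI : CommSemiring
      (Algebra.adjoin K (Set.range fun i : Fin r =>
        ((pderiv i).toLinearMap : Module.End K (MvPolynomial (Fin r) K)))) :=
    Algebra.adjoinCommSemiringOfComm K (by
      rintro a ⟨i, rfl⟩ b ⟨j, rfl⟩
      exact LinearMap.ext fun p => pderiv_endo_comm i j p)
  (Algebra.adjoin K _).val.comp
    (aeval fun i : Fin r =>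
      (⟨(pderiv i).toLinearMap, Algebra.subset_adjoin (Set.mem_range_self i)⟩ :
        Algebra.adjoin K (Set.range fun i : Fin r =>
          ((pderiv i).toLinearMap : Module.End K (MvPolynomial (Fin r) K)))))

/-- `h ∘ F`, the differentiation action. -/
noncomputable def apol {K : Type*} [CommSemiring K] {r : ℕ}
    (h F : MvPolynomial (Fin r) K) : MvPolynomial (Fin r) K :=
  apolHom K r h F

/-- The annihilator ideal of a form `F`. -/
noncomputable def annIdeal {K : Type*} [CommSemiring K] {r : ℕ}
    (F : MvPolynomial (Fin r) K) : Ideal (MvPolynomial (Fin r) K) where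
  carrier := {h | apol h F = 0}
  add_mem' := by
    intro a b ha hb
    simp only [Set.mem_setOf_eq, apol, map_add, LinearMap.add_apply] at *
    rw [ha, hb, add_zero]
  zero_mem' := by simp [apol]
  smul_mem' := by
    intro c x hx
    simp only [Set.mem_setOf_eq, apol, smul_eq_mul, map_mul, Module.End.mul_apply] at *
    rw [hx, map_zero]

/-- The annihilator ideal of a set of forms. -/
noncomputable def annSet {K : Type*} [CommSemiring K] {r : ℕ}
    (W : Set (MvPolynomial (Fin r) K)) : Ideal (MvPolynomial (Fin r) K) where
  carrier := {h | ∀ F ∈ W, apol h F = 0}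
  add_mem' := by
    intro a b ha hb F hF
    have h1 := ha F hF
    have h2 := hb F hF
    simp only [apol] at h1 h2 ⊢
    rw [map_add, LinearMap.add_apply, h1, h2, add_zero]
  zero_mem' := by intro F hF; simp [apol]
  smul_mem' := by
    intro c x hx F hF
    have h1 := hx F hF
    simp only [apol] at h1 ⊢
    rw [smul_eq_mul, map_mul, Module.End.mul_apply, h1, map_zero]

/-- `h ↦ h ∘ F` as a `K`-linear map. -/
noncomputable def apolMap {K : Type*} [CommSemiring K] {r : ℕ}
    (F : MvPolynomial (Fin r) K) :
    MvPolynomial (Fin r) K →ₗ[K] MvPolynomial (Fin r) K where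
  toFun h := apol h F
  map_add' a b := by simp [apol, map_add]
  map_smul' c a := by simp [apol, map_smul]

/-- `R_u ∘ F`, the space of `u`-th order partial derivatives of `F`. -/
noncomputable def derivSpace {K : Type*} [CommSemiring K] {r : ℕ}
    (F : MvPolynomial (Fin r) K) (u : ℕ) :
    Submodule K (MvPolynomial (Fin r) K) :=
  Submodule.map (apolMap F) (homogeneousSubmodule (Fin r) K u)

/-- The degree-`i` part of an ideal `I`, as a subspace of `R_i`. -/
noncomputable def idealPiece {K : Type*} [CommSemiring K] {r : ℕ}
    (I : Ideal (MvPolynomial (Fin r) K)) (i : ℕ) :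
    Submodule K (homogeneousSubmodule (Fin r) K i) :=
  Submodule.comap (homogeneousSubmodule (Fin r) K i).subtype (I.restrictScalars K)

/-- The Hilbert function of `R/I` in degree `i` (for a homogeneous ideal `I`):
`dim_K (R_i / I_i)`. -/
noncomputable def hilb {K : Type*} [Field K] {r : ℕ}
    (I : Ideal (MvPolynomial (Fin r) K)) (i : ℕ) : ℕ :=
  Module.finrank K ((homogeneousSubmodule (Fin r) K i) ⧸ idealPiece I i)

section Aux

open Finsupp Module

variable {K : Type*} [CommSemiring K] {r : ℕ}

lemma apol_C (c : K) (G : MvPolynomial (Fin r) K) : apol (C c) G = c • G := by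
  have : (C c : MvPolynomial (Fin r) K) = algebraMap K _ c := rfl
  rw [apol, this, AlgHom.commutes]
  exact Module.algebraMap_end_apply K K _ c G

lemma apol_one (G : MvPolynomial (Fin r) K) : apol 1 G = G := by
  have : apol (1 : MvPolynomial (Fin r) K) G = (1 : Module.End K (MvPolynomial (Fin r) K)) G := by
    rw [apol, map_one]
  simpa using this

lemma apol_X (i : Fin r) (G : MvPolynomial (Fin r) K) : apol (X i) G = pderiv i G := by
  rw [apol, apolHom]
  simp only [AlgHom.coe_comp, Function.comp_apply, aeval_X]
  rfl

lemma apol_mul (p q G : MvPolynomial (Fin r) K) :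
    apol (p * q) G = apol p (apol q G) := by
  rw [apol, map_mul]; rfl

lemma apol_add_left (p q G : MvPolynomial (Fin r) K) :
    apol (p + q) G = apol p G + apol q G := by
  rw [apol, map_add]; rfl

lemma apol_sum_left {ι : Type*} (s : Finset ι) (f : ι → MvPolynomial (Fin r) K)
    (G : MvPolynomial (Fin r) K) :
    apol (∑ v ∈ s, f v) G = ∑ v ∈ s, apol (f v) G := by
  rw [apol, map_sum]
  simp [apol]

lemma apol_smul_right (c : K) (p G : MvPolynomial (Fin r) K) :
    apol p (c • G) = c • apol p G := map_smul _ c G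

lemma apol_add_right (p G₁ G₂ : MvPolynomial (Fin r) K) :
    apol p (G₁ + G₂) = apol p G₁ + apol p G₂ := map_add _ G₁ G₂

lemma apol_sum_right {ι : Type*} (s : Finset ι) (p : MvPolynomial (Fin r) K)
    (f : ι → MvPolynomial (Fin r) K) :
    apol p (∑ v ∈ s, f v) = ∑ v ∈ s, apol p (f v) := map_sum _ f s

lemma coeff_pderiv (i : Fin r) (f : MvPolynomial (Fin r) K) (m : Fin r →₀ ℕ) :
    coeff m (pderiv i f) = (m i + 1 : ℕ) * coeff (m + Finsupp.single i 1) f := by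
  induction f using MvPolynomial.induction_on' with
  | add p q hp hq => simp [hp, hq, mul_add]
  | monomial s a =>
    rw [pderiv_monomial]
    classical
    by_cases h : s = m + Finsupp.single i 1
    · subst h
      have h1 : (m + Finsupp.single i 1) - Finsupp.single i 1 = m := by
        ext k; simp [Finsupp.single_apply]
      have h2 : ((m + Finsupp.single i 1 : Fin r →₀ ℕ)) i = m i + 1 := by
        rw [Finsupp.add_apply, Finsupp.single_eq_same]
      rw [coeff_monomial, coeff_monomial, if_pos h1, if_pos rfl, h2]
      push_cast; ring
    · rw [coeff_monomial, coeff_monomial, if_neg h]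
      rcases Nat.eq_zero_or_pos (s i) with hs | hs
      · simp [hs]
      · have : ¬ (s - Finsupp.single i 1 = m) := by
          intro hm
          apply h
          rw [← hm]
          ext k
          rcases eq_or_ne k i with rfl | hk
          · simp [Nat.sub_add_cancel hs]
          · simp [Finsupp.single_apply, hk.symm, Ne.symm hk]
        rw [if_neg this, mul_zero]

lemma degree_add' (a b : Fin r →₀ ℕ) : (a + b).degree = a.degree + b.degree := by
  simp [Finsupp.degree_eq_weight_one, map_add]

lemma degree_single' (i : Fin r) (n : ℕ) : (Finsupp.single i n).degree = n := by
  simp [Finsupp.degree_eq_weight_one, Finsupp.weight_apply, Finsupp.sum_single_index]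

lemma coeff_apol_monomial_zero (c : K) (G : MvPolynomial (Fin r) K) (m : Fin r →₀ ℕ) :
    coeff m (apol (monomial (0 : Fin r →₀ ℕ) c) G)
      = ((∏ k : Fin r, (m k + (0 : Fin r →₀ ℕ) k).descFactorial ((0 : Fin r →₀ ℕ) k) : ℕ) : K)
        * (c * coeff (m + 0) G) := by
  have h0 : (monomial (0 : Fin r →₀ ℕ)) c = C c := by simp
  rw [h0, apol_C, coeff_smul]
  simp

lemma coeff_apol_monomial_aux (N : ℕ) : ∀ (a : Fin r →₀ ℕ), a.degree ≤ N →
    ∀ (c : K) (G : MvPolynomial (Fin r) K) (m : Fin r →₀ ℕ),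
    coeff m (apol (monomial a c) G)
      = ((∏ k : Fin r, (m k + a k).descFactorial (a k) : ℕ) : K) * (c * coeff (m + a) G) := by
  induction N with
  | zero =>
    intro a ha c G m
    have h0 : a = 0 := by
      rw [← Finsupp.degree_eq_zero_iff]; omega
    subst h0
    exact coeff_apol_monomial_zero c G m
  | succ N ih =>
    intro a ha c G m
    by_cases h0 : a = 0
    · subst h0; exact coeff_apol_monomial_zero c G m
    · obtain ⟨i, hi⟩ : ∃ i, a i ≠ 0 := by
        by_contra hc
        push_neg at hc
        exact h0 (Finsupp.ext fun k => hc k)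
      set a' : Fin r →₀ ℕ := a - Finsupp.single i 1 with ha'
      have haa : a' + Finsupp.single i 1 = a := by
        ext k
        rcases eq_or_ne k i with rfl | hk
        · simp [ha', Nat.sub_add_cancel (Nat.one_le_iff_ne_zero.2 hi)]
        · simp [ha', Finsupp.single_apply, Ne.symm hk]
      have hdeg : a'.degree ≤ N := by
        have := degree_add' a' (Finsupp.single i 1)
        rw [haa, degree_single'] at this
        omega
      have hak : ∀ k, k ≠ i → a k = a' k := by
        intro k hk
        simp [ha', Finsupp.single_apply, Ne.symm hk]
      have hai : a i = a' i + 1 := by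
        have h := DFunLike.congr_fun haa i
        rw [Finsupp.add_apply, Finsupp.single_eq_same] at h
        omega
      have hmon : (monomial a) c = (monomial a') c * X i := by
        rw [X, monomial_mul, mul_one, haa]
      rw [hmon, apol_mul, apol_X, ih a' hdeg, _root_.coeff_pderiv]
      have hmadd : m + a' + Finsupp.single i 1 = m + a := by
        rw [add_assoc, haa]
      have hmi : ((m + a' : Fin r →₀ ℕ)) i = m i + a' i := by
        rw [Finsupp.add_apply]
      rw [hmadd, hmi]
      have hprod : (∏ k : Fin r, (m k + a k).descFactorial (a k))
          = (m i + a' i + 1) * ∏ k : Fin r, (m k + a' k).descFactorial (a' k) := by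
        rw [← Finset.prod_erase_mul Finset.univ _ (Finset.mem_univ i),
            ← Finset.prod_erase_mul Finset.univ
              (fun k => (m k + a' k).descFactorial (a' k)) (Finset.mem_univ i)]
        have he : ∏ k ∈ Finset.univ.erase i, (m k + a k).descFactorial (a k)
            = ∏ k ∈ Finset.univ.erase i, (m k + a' k).descFactorial (a' k) := by
          apply Finset.prod_congr rfl
          intro k hk
          rw [hak k (Finset.ne_of_mem_erase hk)]
        rw [he, hai, ← add_assoc, Nat.succ_descFactorial_succ]
        ring
      rw [hprod]
      push_cast
      ring

lemma coeff_apol_monomial (a : Fin r →₀ ℕ) (c : K) (G : MvPolynomial (Fin r) K)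
    (m : Fin r →₀ ℕ) :
    coeff m (apol (monomial a c) G)
      = ((∏ k : Fin r, (m k + a k).descFactorial (a k) : ℕ) : K) * (c * coeff (m + a) G) :=
  coeff_apol_monomial_aux a.degree a le_rfl c G m

lemma coeff_apol (h G : MvPolynomial (Fin r) K) (m : Fin r →₀ ℕ) :
    coeff m (apol h G) = ∑ v ∈ h.support,
      ((∏ k : Fin r, (m k + v k).descFactorial (v k) : ℕ) : K)
        * (coeff v h * coeff (m + v) G) := by
  conv_lhs => rw [as_sum h, apol_sum_left]
  rw [coeff_sum]
  exact Finset.sum_congr rfl fun v _ => coeff_apol_monomial v (coeff v h) G m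

lemma apol_zero_left (G : MvPolynomial (Fin r) K) : apol 0 G = 0 := by
  rw [apol, map_zero]; rfl

lemma isHomogeneous_of_coeff (p : MvPolynomial (Fin r) K) (n : ℕ)
    (hp : ∀ m, coeff m p ≠ 0 → m.degree = n) : p.IsHomogeneous n := by
  intro d hd
  have := hp d hd
  rwa [Finsupp.degree_eq_weight_one] at this

lemma degree_of_coeff_ne_zero {p : MvPolynomial (Fin r) K} {n : ℕ} {m : Fin r →₀ ℕ}
    (hp : p.IsHomogeneous n) (hm : coeff m p ≠ 0) : m.degree = n := by
  by_contra hc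
  exact hm (hp.coeff_eq_zero hc)

lemma apol_isHomogeneous {n d : ℕ} {h G : MvPolynomial (Fin r) K} (hh : h.IsHomogeneous n)
    (hG : G.IsHomogeneous d) : (apol h G).IsHomogeneous (d - n) := by
  apply isHomogeneous_of_coeff
  intro m hm
  rw [coeff_apol] at hm
  obtain ⟨v, hv, hne⟩ := Finset.exists_ne_zero_of_sum_ne_zero hm
  have hvh : coeff v h ≠ 0 := MvPolynomial.mem_support_iff.mp hv
  have hGne : coeff (m + v) G ≠ 0 := by
    intro h0; rw [h0] at hne; simp at hne
  have h1 : v.degree = n := degree_of_coeff_ne_zero hh hvh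
  have h2 : (m + v).degree = d := degree_of_coeff_ne_zero hG hGne
  rw [degree_add'] at h2
  omega

lemma apol_eq_zero_of_lt {n d : ℕ} {h G : MvPolynomial (Fin r) K} (hh : h.IsHomogeneous n)
    (hG : G.IsHomogeneous d) (hlt : d < n) : apol h G = 0 := by
  apply MvPolynomial.ext
  intro m
  rw [coeff_apol, coeff_zero]
  apply Finset.sum_eq_zero
  intro v hv
  have hvd : v.degree = n := degree_of_coeff_ne_zero hh (MvPolynomial.mem_support_iff.mp hv)
  have hzero : coeff (m + v) G = 0 := by
    apply hG.coeff_eq_zero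
    rw [degree_add']
    omega
  rw [hzero]
  ring

lemma eq_zero_of_isHomogeneous_zero {p : MvPolynomial (Fin r) K} (hp : p.IsHomogeneous 0)
    (hc : constantCoeff p = 0) : p = 0 := by
  have h1 : homogeneousComponent 0 p = p := by
    rw [homogeneousComponent_of_mem ((mem_homogeneousSubmodule 0 p).2 hp), if_pos rfl]
  rw [← h1, homogeneousComponent_zero]
  rw [show coeff 0 p = constantCoeff p from rfl, hc, map_zero]

lemma apol_homogeneousComponent_eq_zero {d : ℕ} {h G : MvPolynomial (Fin r) K}
    (hG : G.IsHomogeneous d) (h0 : apol h G = 0) (n : ℕ) :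
    apol (homogeneousComponent n h) G = 0 := by
  rcases lt_or_ge d n with hlt | hle
  · exact apol_eq_zero_of_lt (homogeneousComponent_isHomogeneous n h) hG hlt
  rcases le_or_gt n h.totalDegree with hn | hn
  · have h2 : (0 : MvPolynomial (Fin r) K)
        = ∑ v ∈ Finset.range (h.totalDegree + 1), apol (homogeneousComponent v h) G := by
      rw [← apol_sum_left, sum_homogeneousComponent, h0]
    have h3 := congrArg (homogeneousComponent (d - n)) h2
    rw [map_zero, map_sum] at h3
    have h4 : ∀ v ∈ Finset.range (h.totalDegree + 1),
        homogeneousComponent (d - n) (apol (homogeneousComponent v h) G)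
          = if v = n then apol (homogeneousComponent n h) G else 0 := by
      intro v _
      rcases le_or_gt v d with hvd | hvd
      · have hmem : apol (homogeneousComponent v h) G ∈ homogeneousSubmodule (Fin r) K (d - v) :=
          (mem_homogeneousSubmodule _ _).2
            (apol_isHomogeneous (homogeneousComponent_isHomogeneous v h) hG)
        rw [homogeneousComponent_of_mem hmem]
        by_cases hv : v = n
        · subst hv; simp
        · rw [if_neg (by omega), if_neg hv]
      · rw [apol_eq_zero_of_lt (homogeneousComponent_isHomogeneous v h) hG hvd,
          map_zero, if_neg (by omega)]
    rw [Finset.sum_congr rfl h4, Finset.sum_ite_eq' _ n] at h3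
    rw [if_pos (Finset.mem_range.2 (by omega))] at h3
    exact h3.symm
  · rw [homogeneousComponent_eq_zero _ h hn, apol_zero_left]

end Aux

section AuxField

open Finsupp Module

variable {K : Type*} [Field K] [CharZero K] {r : ℕ}

lemma apol_nondeg {d : ℕ} {G : MvPolynomial (Fin r) K} (hG : G.IsHomogeneous d)
    (h0 : ∀ h : MvPolynomial (Fin r) K, h.IsHomogeneous d → apol h G = 0) : G = 0 := by
  apply MvPolynomial.ext
  intro m
  rw [coeff_zero]
  rcases eq_or_ne m.degree d with hd | hd
  · have h1 := h0 (monomial m 1) (isHomogeneous_monomial 1 hd)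
    have h2 := congrArg (coeff 0) h1
    rw [coeff_apol_monomial, coeff_zero] at h2
    simp only [Finsupp.coe_zero, Pi.zero_apply, zero_add, one_mul] at h2
    have hne : ((∏ k : Fin r, (m k).descFactorial (m k) : ℕ) : K) ≠ 0 := by
      rw [Nat.cast_ne_zero]
      apply Finset.prod_ne_zero_iff.2
      intro k _
      rw [Nat.descFactorial_self]
      exact Nat.factorial_ne_zero _
    rcases mul_eq_zero.mp h2 with h | h
    · exact absurd h hne
    · exact h
  · exact hG.coeff_eq_zero hd

lemma homog_fd (u : ℕ) : FiniteDimensional K ↥(homogeneousSubmodule (Fin r) K u) := by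
  apply Submodule.finiteDimensional_of_le (S₂ := restrictTotalDegree (Fin r) K u)
  intro p hp
  rw [mem_restrictTotalDegree]
  exact MvPolynomial.IsHomogeneous.totalDegree_le ((mem_homogeneousSubmodule _ _).1 hp)

variable {j : ℕ}

lemma comp_apol {F : MvPolynomial (Fin r) K} (hF : F.IsHomogeneous j)
    (k : MvPolynomial (Fin r) K) {v : ℕ} (hv : v ≤ j) :
    homogeneousComponent v (apol k F) = apol (homogeneousComponent (j - v) k) F := by
  classical
  conv_lhs => rw [← sum_homogeneousComponent k, apol_sum_left, map_sum]
  have h4 : ∀ n ∈ Finset.range (k.totalDegree + 1),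
      homogeneousComponent v (apol (homogeneousComponent n k) F)
        = if n = j - v then apol (homogeneousComponent n k) F else 0 := by
    intro n _
    rcases le_or_gt n j with hn | hn
    · have hmem : apol (homogeneousComponent n k) F ∈ homogeneousSubmodule (Fin r) K (j - n) :=
        (mem_homogeneousSubmodule _ _).2
          (apol_isHomogeneous (homogeneousComponent_isHomogeneous n k) hF)
      rw [homogeneousComponent_of_mem hmem]
      by_cases hnv : n = j - v
      · rw [if_pos (by omega), if_pos hnv]
      · rw [if_neg (by omega), if_neg hnv]
    · rw [apol_eq_zero_of_lt (homogeneousComponent_isHomogeneous n k) hF hn, map_zero,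
        if_neg (by omega)]
  rw [Finset.sum_congr rfl h4, Finset.sum_ite_eq' _ (j - v)]
  by_cases hr : j - v ∈ Finset.range (k.totalDegree + 1)
  · rw [if_pos hr]
  · rw [if_neg hr,
      homogeneousComponent_eq_zero _ k (by rw [Finset.mem_range] at hr; omega),
      apol_zero_left]

lemma comp_apol_gt {F : MvPolynomial (Fin r) K} (hF : F.IsHomogeneous j)
    (k : MvPolynomial (Fin r) K) {v : ℕ} (hv : j < v) :
    homogeneousComponent v (apol k F) = 0 := by
  conv_lhs => rw [← sum_homogeneousComponent k, apol_sum_left, map_sum]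
  apply Finset.sum_eq_zero
  intro n _
  rcases le_or_gt n j with hn | hn
  · have hmem : apol (homogeneousComponent n k) F ∈ homogeneousSubmodule (Fin r) K (j - n) :=
      (mem_homogeneousSubmodule _ _).2
        (apol_isHomogeneous (homogeneousComponent_isHomogeneous n k) hF)
    rw [homogeneousComponent_of_mem hmem, if_neg (by omega)]
  · rw [apol_eq_zero_of_lt (homogeneousComponent_isHomogeneous n k) hF hn, map_zero]

lemma annSet_homog {S : Set (MvPolynomial (Fin r) K)} (hS : ∀ G ∈ S, G.IsHomogeneous j)
    {h : MvPolynomial (Fin r) K} (hh : h ∈ annSet S) (n : ℕ) :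
    homogeneousComponent n h ∈ annSet S :=
  fun G hG => apol_homogeneousComponent_eq_zero (hS G hG) (hh G hG) n

end AuxField

section Pairing

/-- The constant coefficient as a linear map. -/
noncomputable def ccLin (K : Type*) [CommSemiring K] (r : ℕ) :
    MvPolynomial (Fin r) K →ₗ[K] K where
  toFun := constantCoeff
  map_add' := fun a b => map_add _ a b
  map_smul' := fun c p => by
    simp only [RingHom.id_apply, smul_eq_mul]
    rw [show constantCoeff (c • p) = coeff 0 (c • p) from rfl, coeff_smul]
    rfl

/-- The apolarity pairing between two subspaces. -/
noncomputable def pairing {K : Type*} [CommSemiring K] {r : ℕ}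
    (Ru Mu : Submodule K (MvPolynomial (Fin r) K)) :
    ↥Ru →ₗ[K] Module.Dual K ↥Mu where
  toFun h := (ccLin K r).comp ((apolHom K r h.1).comp Mu.subtype)
  map_add' h₁ h₂ := by
    apply LinearMap.ext; intro G
    have : apolHom K r (h₁.1 + h₂.1) = apolHom K r h₁.1 + apolHom K r h₂.1 := map_add _ _ _
    simp [Submodule.coe_add, this]
  map_smul' c h := by
    apply LinearMap.ext; intro G
    have : apolHom K r (c • h.1) = c • apolHom K r h.1 :=
      map_smul (apolHom K r).toLinearMap c h.1
    simp [Submodule.coe_smul, this]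

lemma pairing_apply {K : Type*} [CommSemiring K] {r : ℕ}
    (Ru Mu : Submodule K (MvPolynomial (Fin r) K)) (h : ↥Ru) (G : ↥Mu) :
    pairing Ru Mu h G = constantCoeff (apol h.1 G.1) := rfl

/-- Macaulay duality count: for a "graded, derivation-closed" inverse system `M`,
the Hilbert function of `R/Ann(M)` in degree `u` is `dim M_u`. -/
lemma hilb_annSet_eq {K : Type*} [Field K] [CharZero K] {r : ℕ}
    {M : Submodule K (MvPolynomial (Fin r) K)}
    (hgr : ∀ G ∈ M, ∀ v : ℕ, homogeneousComponent v G ∈ M)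
    (hcl : ∀ G ∈ M, ∀ g : MvPolynomial (Fin r) K, apol g G ∈ M) (u : ℕ) :
    hilb (annSet (M : Set (MvPolynomial (Fin r) K))) u
      = Module.finrank K ↥(M ⊓ homogeneousSubmodule (Fin r) K u) := by
  classical
  haveI hRufd : FiniteDimensional K ↥(homogeneousSubmodule (Fin r) K u) := homog_fd u
  haveI hMufd : FiniteDimensional K ↥(M ⊓ homogeneousSubmodule (Fin r) K u) :=
    Submodule.finiteDimensional_of_le inf_le_right
  set Mu := M ⊓ homogeneousSubmodule (Fin r) K u with hMudef
  set B := pairing (homogeneousSubmodule (Fin r) K u) Mu with hBdef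
  have hconst : ∀ (h G : MvPolynomial (Fin r) K), h.IsHomogeneous u → G.IsHomogeneous u →
      constantCoeff (apol h G) = 0 → apol h G = 0 := by
    intro h G hh hG hc
    have h1 := apol_isHomogeneous hh hG
    rw [Nat.sub_self] at h1
    exact eq_zero_of_isHomogeneous_zero h1 hc
  have hker : LinearMap.ker B = idealPiece (annSet (M : Set (MvPolynomial (Fin r) K))) u := by
    ext h
    rw [LinearMap.mem_ker]
    constructor
    · intro hk
      have hkill : ∀ G ∈ Mu, apol h.1 G = 0 := by
        intro G hG
        have h1 : constantCoeff (apol h.1 G) = 0 := LinearMap.congr_fun hk ⟨G, hG⟩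
        exact hconst _ _ ((mem_homogeneousSubmodule _ _).1 h.2)
          ((mem_homogeneousSubmodule _ _).1 ((Submodule.mem_inf.mp hG).2)) h1
      have hann : h.1 ∈ annSet (M : Set (MvPolynomial (Fin r) K)) := by
        intro G hG
        have hdec : apol h.1 G
            = ∑ v ∈ Finset.range (G.totalDegree + 1), apol h.1 (homogeneousComponent v G) := by
          conv_lhs => rw [← sum_homogeneousComponent G]
          exact apol_sum_right _ _ _
        rw [hdec]
        apply Finset.sum_eq_zero
        intro v _
        have hGv : homogeneousComponent v G ∈ M := hgr G hG v
        have hGvh : (homogeneousComponent v G).IsHomogeneous v :=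
          homogeneousComponent_isHomogeneous v G
        rcases lt_trichotomy v u with hvu | hvu | hvu
        · exact apol_eq_zero_of_lt ((mem_homogeneousSubmodule _ _).1 h.2) hGvh hvu
        · subst hvu
          exact hkill _ (Submodule.mem_inf.mpr ⟨hGv, (mem_homogeneousSubmodule _ _).2 hGvh⟩)
        · apply apol_nondeg (apol_isHomogeneous ((mem_homogeneousSubmodule _ _).1 h.2) hGvh)
          intro g hg
          rw [← apol_mul, mul_comm, apol_mul]
          have h1 : apol g (homogeneousComponent v G) ∈ M := hcl _ hGv g
          have h2 : (apol g (homogeneousComponent v G)).IsHomogeneous u := by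
            have h3 := apol_isHomogeneous hg hGvh
            rwa [Nat.sub_sub_self hvu.le] at h3
          exact hkill _ (Submodule.mem_inf.mpr ⟨h1, (mem_homogeneousSubmodule _ _).2 h2⟩)
      exact hann
    · intro hk
      apply LinearMap.ext; intro G
      have hann : h.1 ∈ annSet (M : Set (MvPolynomial (Fin r) K)) := hk
      have h0 : apol h.1 G.1 = 0 := hann G.1 (Submodule.mem_inf.mp G.2).1
      show constantCoeff (apol h.1 G.1) = 0
      rw [h0, map_zero]
  have hflipker : LinearMap.ker B.flip = ⊥ := by
    apply (Submodule.eq_bot_iff _).2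
    intro G hG
    have hG0 : G.1 = 0 := by
      apply apol_nondeg ((mem_homogeneousSubmodule _ _).1 (Submodule.mem_inf.mp G.2).2)
      intro h hh
      have h1 : constantCoeff (apol h G.1) = 0 :=
        LinearMap.congr_fun (LinearMap.mem_ker.mp hG) ⟨h, (mem_homogeneousSubmodule _ _).2 hh⟩
      exact hconst _ _ hh ((mem_homogeneousSubmodule _ _).1 (Submodule.mem_inf.mp G.2).2) h1
    exact Subtype.ext hG0
  have hflipinj : Function.Injective B.flip := LinearMap.ker_eq_bot.mp hflipker
  have hBeq : B = (LinearMap.dualMap B.flip).comp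
      (Module.Dual.eval K ↥(homogeneousSubmodule (Fin r) K u)) := by
    apply LinearMap.ext; intro h; apply LinearMap.ext; intro G; rfl
  have hrange : LinearMap.range B = LinearMap.range (LinearMap.dualMap B.flip) := by
    rw [hBeq]
    apply LinearMap.range_comp_of_range_eq_top
    rw [← Module.evalEquiv_toLinearMap]
    exact LinearEquiv.range _
  have hq : hilb (annSet (M : Set (MvPolynomial (Fin r) K))) u
      = Module.finrank K (↥(homogeneousSubmodule (Fin r) K u) ⧸ LinearMap.ker B) := by
    unfold hilb
    rw [← hker]
  rw [hq]
  have e1 : Module.finrank K (↥(homogeneousSubmodule (Fin r) K u) ⧸ LinearMap.ker B)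
      = Module.finrank K ↥(LinearMap.range B) := (LinearMap.quotKerEquivRange B).finrank_eq
  rw [e1, hrange, LinearMap.finrank_range_dualMap_eq_finrank_range,
    LinearMap.finrank_range_of_inj hflipinj]

end Pairing

section Count

open Module

variable {K : Type*} [Field K] [CharZero K] {r j : ℕ}

lemma finrank_idealPiece (I : Ideal (MvPolynomial (Fin r) K)) (i : ℕ) :
    Module.finrank K ↥(idealPiece I i)
      = Module.finrank K ↥(I.restrictScalars K ⊓ homogeneousSubmodule (Fin r) K i) := by
  have h1 : idealPiece I i
      = Submodule.comap (homogeneousSubmodule (Fin r) K i).subtype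
          (I.restrictScalars K ⊓ homogeneousSubmodule (Fin r) K i) := by
    rw [Submodule.comap_inf, idealPiece, Submodule.comap_subtype_self, inf_top_eq]
  rw [h1]
  exact (Submodule.comapSubtypeEquivOfLe inf_le_right).finrank_eq

lemma M_graded (V : Submodule K (MvPolynomial (Fin r) K))
    (hVhom : ∀ G ∈ V, G.IsHomogeneous j) {F : MvPolynomial (Fin r) K}
    (hF : F.IsHomogeneous j) :
    ∀ G ∈ Submodule.map (apolMap F)
        ((annSet (V : Set (MvPolynomial (Fin r) K))).restrictScalars K),
      ∀ v : ℕ, homogeneousComponent v G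
        ∈ Submodule.map (apolMap F)
            ((annSet (V : Set (MvPolynomial (Fin r) K))).restrictScalars K) := by
  rintro G ⟨k, hk, rfl⟩ v
  rcases le_or_gt v j with hv | hv
  · rw [show apolMap F k = apol k F from rfl, comp_apol hF k hv]
    exact ⟨homogeneousComponent (j - v) k, annSet_homog hVhom hk _, rfl⟩
  · rw [show apolMap F k = apol k F from rfl, comp_apol_gt hF k hv]
    exact Submodule.zero_mem _

lemma M_closed (V : Submodule K (MvPolynomial (Fin r) K)) (F : MvPolynomial (Fin r) K) :
    ∀ G ∈ Submodule.map (apolMap F)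
        ((annSet (V : Set (MvPolynomial (Fin r) K))).restrictScalars K),
      ∀ g : MvPolynomial (Fin r) K, apol g G
        ∈ Submodule.map (apolMap F)
            ((annSet (V : Set (MvPolynomial (Fin r) K))).restrictScalars K) := by
  rintro G ⟨k, hk, rfl⟩ g
  rw [show apolMap F k = apol k F from rfl, ← apol_mul]
  exact ⟨g * k, Ideal.mul_mem_left _ g hk, rfl⟩

set_option maxHeartbeats 1000000 in
set_option synthInstance.maxHeartbeats 500000 in
lemma map_inf_le (V : Submodule K (MvPolynomial (Fin r) K))
    (hVhom : ∀ G ∈ V, G.IsHomogeneous j) {F : MvPolynomial (Fin r) K}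
    (hF : F.IsHomogeneous j) (i' : ℕ) :
    Submodule.map (apolMap F)
        ((annSet (V : Set (MvPolynomial (Fin r) K))).restrictScalars K
          ⊓ homogeneousSubmodule (Fin r) K i')
      ≤ Submodule.map (apolMap F)
          ((annSet (V : Set (MvPolynomial (Fin r) K))).restrictScalars K)
        ⊓ homogeneousSubmodule (Fin r) K (j - i') := by
  rintro G hG
  obtain ⟨k, hk, hkG⟩ := hG
  obtain ⟨hk1, hk2⟩ := Submodule.mem_inf.mp hk
  have hkG' : apol k F = G := hkG
  refine Submodule.mem_inf.mpr ⟨⟨k, hk1, hkG⟩, ?_⟩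
  rw [← hkG']
  exact (mem_homogeneousSubmodule _ _).2
    (apol_isHomogeneous ((mem_homogeneousSubmodule _ _).1 hk2) hF)

set_option maxHeartbeats 1000000 in
set_option synthInstance.maxHeartbeats 500000 in
lemma le_map_inf (V : Submodule K (MvPolynomial (Fin r) K))
    (hVhom : ∀ G ∈ V, G.IsHomogeneous j) {F : MvPolynomial (Fin r) K}
    (hF : F.IsHomogeneous j) (i' : ℕ) (hi' : i' ≤ j) :
    Submodule.map (apolMap F)
          ((annSet (V : Set (MvPolynomial (Fin r) K))).restrictScalars K)
        ⊓ homogeneousSubmodule (Fin r) K (j - i')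
      ≤ Submodule.map (apolMap F)
        ((annSet (V : Set (MvPolynomial (Fin r) K))).restrictScalars K
          ⊓ homogeneousSubmodule (Fin r) K i') := by
  rintro G hG
  obtain ⟨hGM, hGh⟩ := Submodule.mem_inf.mp hG
  obtain ⟨k, hk, hkG⟩ := hGM
  have hkG' : apol k F = G := hkG
  rw [← hkG'] at hGh ⊢
  have h2 : homogeneousComponent (j - i') (apol k F) = apol k F := by
    rw [homogeneousComponent_of_mem hGh, if_pos rfl]
  have h3 : apol k F = apol (homogeneousComponent (j - (j - i')) k) F := by
    rw [← comp_apol hF k (by omega), h2]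
  rw [Nat.sub_sub_self hi'] at h3
  rw [h3]
  exact Submodule.mem_map.mpr
    ⟨homogeneousComponent i' k,
      Submodule.mem_inf.mpr ⟨annSet_homog hVhom hk i', homogeneousComponent_mem i' k⟩,
      rfl⟩

set_option maxHeartbeats 1000000 in
set_option synthInstance.maxHeartbeats 500000 in
lemma ker_domRestrict_eq (V W : Submodule K (MvPolynomial (Fin r) K)) (hVW : V ≤ W)
    {F : MvPolynomial (Fin r) K} (hFW : F ∈ W)
    (hWle : W ≤ V ⊔ Submodule.span K {F}) (i' : ℕ) :
    LinearMap.ker ((apolMap F).domRestrict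
        ((annSet (V : Set (MvPolynomial (Fin r) K))).restrictScalars K
          ⊓ homogeneousSubmodule (Fin r) K i'))
      = Submodule.comap
          ((annSet (V : Set (MvPolynomial (Fin r) K))).restrictScalars K
            ⊓ homogeneousSubmodule (Fin r) K i').subtype
          ((annSet (W : Set (MvPolynomial (Fin r) K))).restrictScalars K
            ⊓ homogeneousSubmodule (Fin r) K i') := by
  ext x
  obtain ⟨h, hh⟩ := x
  simp only [LinearMap.mem_ker, Submodule.mem_comap]
  constructor
  · intro h0
    have h0' : apol h F = 0 := h0
    refine Submodule.mem_inf.mpr ⟨?_, (Submodule.mem_inf.mp hh).2⟩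
    intro G hGW
    have hGmem : G ∈ V ⊔ Submodule.span K {F} := hWle hGW
    have hle : V ⊔ Submodule.span K {F} ≤ LinearMap.ker (apolHom K r h) := by
      apply sup_le
      · intro x hx
        exact LinearMap.mem_ker.mpr ((Submodule.mem_inf.mp hh).1 x hx)
      · rw [Submodule.span_singleton_le_iff_mem]
        exact LinearMap.mem_ker.mpr h0'
    exact hle hGmem
  · intro h1
    show apol h F = 0
    exact (Submodule.mem_inf.mp h1).1 F hFW

set_option maxHeartbeats 1000000 in
set_option synthInstance.maxHeartbeats 500000 in
lemma count_lemma (V W : Submodule K (MvPolynomial (Fin r) K)) (hVW : V ≤ W)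
    (hVhom : ∀ G ∈ V, G.IsHomogeneous j) {F : MvPolynomial (Fin r) K} (hFW : F ∈ W)
    (hF : F.IsHomogeneous j) (hWle : W ≤ V ⊔ Submodule.span K {F})
    (i' : ℕ) (hi' : i' ≤ j) :
    Module.finrank K ↥(idealPiece (annSet (V : Set (MvPolynomial (Fin r) K))) i')
      = Module.finrank K ↥(idealPiece (annSet (W : Set (MvPolynomial (Fin r) K))) i')
        + Module.finrank K
            ↥(Submodule.map (apolMap F)
                ((annSet (V : Set (MvPolynomial (Fin r) K))).restrictScalars K)
              ⊓ homogeneousSubmodule (Fin r) K (j - i')) := by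
  classical
  haveI := homog_fd (K := K) (r := r) i'
  haveI : FiniteDimensional K
      ↥((annSet (V : Set (MvPolynomial (Fin r) K))).restrictScalars K
          ⊓ homogeneousSubmodule (Fin r) K i') :=
    Submodule.finiteDimensional_of_le inf_le_right
  have hrange : LinearMap.range ((apolMap F).domRestrict
        ((annSet (V : Set (MvPolynomial (Fin r) K))).restrictScalars K
          ⊓ homogeneousSubmodule (Fin r) K i'))
      = Submodule.map (apolMap F)
          ((annSet (V : Set (MvPolynomial (Fin r) K))).restrictScalars K)
        ⊓ homogeneousSubmodule (Fin r) K (j - i') := by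
    rw [LinearMap.range_domRestrict]
    exact le_antisymm (map_inf_le V hVhom hF i') (le_map_inf V hVhom hF i' hi')
  have hkerφ := ker_domRestrict_eq V W hVW hFW hWle i'
  have hAW : (annSet (W : Set (MvPolynomial (Fin r) K))).restrictScalars K
        ⊓ homogeneousSubmodule (Fin r) K i'
      ≤ (annSet (V : Set (MvPolynomial (Fin r) K))).restrictScalars K
        ⊓ homogeneousSubmodule (Fin r) K i' := by
    intro x hx
    obtain ⟨hx1, hx2⟩ := Submodule.mem_inf.mp hx
    exact Submodule.mem_inf.mpr ⟨fun G hG => hx1 G (hVW hG), hx2⟩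
  have hkfr : Module.finrank K ↥(LinearMap.ker ((apolMap F).domRestrict
        ((annSet (V : Set (MvPolynomial (Fin r) K))).restrictScalars K
          ⊓ homogeneousSubmodule (Fin r) K i')))
      = Module.finrank K
          ↥((annSet (W : Set (MvPolynomial (Fin r) K))).restrictScalars K
            ⊓ homogeneousSubmodule (Fin r) K i') := by
    rw [hkerφ]
    exact (Submodule.comapSubtypeEquivOfLe hAW).finrank_eq
  have hrn := LinearMap.finrank_range_add_finrank_ker ((apolMap F).domRestrict
        ((annSet (V : Set (MvPolynomial (Fin r) K))).restrictScalars K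
          ⊓ homogeneousSubmodule (Fin r) K i'))
  rw [hrange, hkfr] at hrn
  rw [finrank_idealPiece, finrank_idealPiece]
  omega

end Count

set_option maxHeartbeats 1000000 in
set_option synthInstance.maxHeartbeats 500000 in
/-- Lemma 2.5, last part: the reversed Hilbert function of
`C = ker(A → B_V)`, `(H(C)ˆ)_i = H(C)_{j-i}`, is an O-sequence: it is the Hilbert
function of some standard graded Artinian `K`-algebra (a quotient of a polynomial
ring by a homogeneous ideal, vanishing in degrees `> j`). -/
theorem reversed_kernel_hilbert_is_O_sequence {K : Type*} [Field K] [CharZero K]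
    {r j t : ℕ} (ht : 2 ≤ t)
    (W V : Submodule K (MvPolynomial (Fin r) K))
    (hWhom : ∀ F ∈ W, MvPolynomial.IsHomogeneous F j)
    (hdimW : Module.finrank K W = t) (hVW : V ≤ W)
    (hdimV : Module.finrank K V + 1 = t)
    (hC : ℕ → ℕ)
    (hCdef : ∀ i : ℕ, hC i
        = Module.finrank K ↥(idealPiece (annSet (V : Set (MvPolynomial (Fin r) K))) i)
          - Module.finrank K ↥(idealPiece (annSet (W : Set (MvPolynomial (Fin r) K))) i)) :
    ∃ (m : ℕ) (J : Ideal (MvPolynomial (Fin m) K)),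
      (∀ p ∈ J, ∀ n : ℕ, MvPolynomial.homogeneousComponent n p ∈ J) ∧
      (∀ i ≤ j, hilb J i = hC (j - i)) ∧
      (∀ i : ℕ, j < i → hilb J i = 0) := by
  classical
  haveI hWfd : FiniteDimensional K ↥W := Module.finite_of_finrank_pos (by rw [hdimW]; omega)
  haveI hVfd : FiniteDimensional K ↥V := Submodule.finiteDimensional_of_le hVW
  have hVneW : V ≠ W := fun h => by rw [h, hdimW] at hdimV; omega
  obtain ⟨F, hFW, hFV⟩ := SetLike.exists_of_lt (lt_of_le_of_ne hVW hVneW)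
  have hF : F.IsHomogeneous j := hWhom F hFW
  have hVhom : ∀ G ∈ V, G.IsHomogeneous j := fun G hG => hWhom G (hVW hG)
  have hsub : V ⊔ Submodule.span K {F} ≤ W :=
    sup_le hVW ((Submodule.span_singleton_le_iff_mem F W).2 hFW)
  haveI : FiniteDimensional K ↥(V ⊔ Submodule.span K {F}) :=
    Submodule.finiteDimensional_of_le hsub
  have hlt : V < V ⊔ Submodule.span K {F} := by
    refine lt_of_le_of_ne le_sup_left ?_
    intro he
    exact hFV (he ▸ (Submodule.mem_sup_right (Submodule.mem_span_singleton_self F)))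
  have hfr : Module.finrank K ↥V < Module.finrank K ↥(V ⊔ Submodule.span K {F}) :=
    Submodule.finrank_lt_finrank_of_lt hlt
  have hWeq : V ⊔ Submodule.span K {F} = W := by
    apply Submodule.eq_of_le_of_finrank_le hsub
    rw [hdimW]
    omega
  have hWle : W ≤ V ⊔ Submodule.span K {F} := hWeq.ge
  have hbot : ∀ u : ℕ, j < u →
      Submodule.map (apolMap F)
          ((annSet (V : Set (MvPolynomial (Fin r) K))).restrictScalars K)
        ⊓ homogeneousSubmodule (Fin r) K u = ⊥ := by
    intro u hu
    apply (Submodule.eq_bot_iff _).2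
    intro G hG
    obtain ⟨hGM, hGh⟩ := Submodule.mem_inf.mp hG
    obtain ⟨k, hk, hkG⟩ := hGM
    have hkG' : apol k F = G := hkG
    rw [← hkG'] at hGh ⊢
    have h2 : homogeneousComponent u (apol k F) = apol k F := by
      rw [homogeneousComponent_of_mem hGh, if_pos rfl]
    rw [← h2, comp_apol_gt hF k hu]
  refine ⟨r, annSet ((Submodule.map (apolMap F)
      ((annSet (V : Set (MvPolynomial (Fin r) K))).restrictScalars K) : Submodule K _) :
        Set (MvPolynomial (Fin r) K)), ?_, ?_, ?_⟩
  · intro p hp n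
    intro G hG
    have hdec : apol (homogeneousComponent n p) G
        = ∑ v ∈ Finset.range (G.totalDegree + 1),
            apol (homogeneousComponent n p) (homogeneousComponent v G) := by
      conv_lhs => rw [← sum_homogeneousComponent G]
      exact apol_sum_right _ _ _
    rw [hdec]
    apply Finset.sum_eq_zero
    intro v _
    exact apol_homogeneousComponent_eq_zero (homogeneousComponent_isHomogeneous v G)
      (hp _ (M_graded V hVhom hF G hG v)) n
  · intro i hij
    rw [hilb_annSet_eq (M_graded V hVhom hF) (M_closed V F) i, hCdef (j - i),
      count_lemma V W hVW hVhom hFW hF hWle (j - i) (by omega)]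
    have hji : j - (j - i) = i := by omega
    rw [hji]
    omega
  · intro i hji
    rw [hilb_annSet_eq (M_graded V hVhom hF) (M_closed V F) i, hbot i hji]
    exact finrank_bot K _
end

section
/- Let A = R/Ann(F,G) be a type two level algebra of socle degree j and fix 0 < i < j. There do not exist two distinct values λ_1 ≠ λ_2 in K ∪ {∞} such that both H(R/Ann(F_{λ_1}))_i < H(A)_i/2 and H(R/Ann(F_{λ_2}))_i < H(A)_i/2, where F_λ = F + λG and F_∞ = G. -/
open MvPolynomial

section Aux
variable {K : Type*} [Field K] {r : ℕ}

lemma mem_annIdeal_iff (h F : MvPolynomial (Fin r) K) :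
    h ∈ annIdeal F ↔ apol h F = 0 := Iff.rfl

lemma apol_pencil (h F G : MvPolynomial (Fin r) K) (c : K) :
    apol h (F + c • G) = apol h F + c • apol h G := by
  simp [apol, map_add, map_smul]

lemma ann_inf_pencil (F G : MvPolynomial (Fin r) K) (o₁ o₂ : Option K) (hne : o₁ ≠ o₂) :
    annIdeal (o₁.elim G fun c => F + c • G) ⊓ annIdeal (o₂.elim G fun c => F + c • G)
      = annIdeal F ⊓ annIdeal G := by
  ext h
  simp only [Submodule.mem_inf, mem_annIdeal_iff]
  have key : ∀ c₁ c₂ : K, c₁ ≠ c₂ →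
      (apol h (F + c₁ • G) = 0 ∧ apol h (F + c₂ • G) = 0 ↔
        apol h F = 0 ∧ apol h G = 0) := by
    intro c₁ c₂ hc
    rw [apol_pencil, apol_pencil]
    constructor
    · rintro ⟨h1, h2⟩
      have hb : (c₁ - c₂) • apol h G = 0 := by
        rw [sub_smul]
        have := congrArg₂ (· - ·) h1 h2
        simpa [add_sub_add_left_eq_sub] using this
      have hG0 : apol h G = 0 := by
        rcases smul_eq_zero.mp hb with h' | h'
        · exact absurd (sub_eq_zero.mp h') hc
        · exact h'
      refine ⟨?_, hG0⟩
      simpa [hG0] using h1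
    · rintro ⟨h1, h2⟩
      simp [h1, h2]
  have keyG : ∀ c : K,
      (apol h G = 0 ∧ apol h (F + c • G) = 0 ↔ apol h F = 0 ∧ apol h G = 0) := by
    intro c
    rw [apol_pencil]
    constructor
    · rintro ⟨h1, h2⟩
      refine ⟨?_, h1⟩
      simpa [h1] using h2
    · rintro ⟨h1, h2⟩
      simp [h1, h2]
  match o₁, o₂, hne with
  | none, none, hne => exact absurd rfl hne
  | none, some c, _ => exact keyG c
  | some c, none, _ => exact (and_comm.trans (keyG c))
  | some c₁, some c₂, hne => exact key c₁ c₂ (by simpa using hne)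

lemma idealPiece_inf (I J : Ideal (MvPolynomial (Fin r) K)) (i : ℕ) :
    idealPiece (I ⊓ J) i = idealPiece I i ⊓ idealPiece J i := rfl

lemma homogeneousSubmodule_finiteDimensional (i : ℕ) :
    FiniteDimensional K (homogeneousSubmodule (Fin r) K i) :=
  Submodule.finiteDimensional_of_le (S₂ := restrictTotalDegree (Fin r) K i)
    (fun p hp => (mem_restrictTotalDegree _ _ _).mpr
      ((mem_homogeneousSubmodule _ _).mp hp).totalDegree_le)

lemma finrank_quot_inf_le {V : Type*} [AddCommGroup V] [Module K V] [FiniteDimensional K V]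
    (P Q : Submodule K V) :
    Module.finrank K (V ⧸ (P ⊓ Q)) ≤
      Module.finrank K (V ⧸ P) + Module.finrank K (V ⧸ Q) := by
  let f := P.mkQ.prod Q.mkQ
  have hk : LinearMap.ker f = P ⊓ Q := by
    simp [f, LinearMap.ker_prod, Submodule.ker_mkQ]
  calc Module.finrank K (V ⧸ (P ⊓ Q))
      = Module.finrank K (V ⧸ LinearMap.ker f) := by rw [hk]
    _ = Module.finrank K (LinearMap.range f) := f.quotKerEquivRange.finrank_eq
    _ ≤ Module.finrank K ((V ⧸ P) × (V ⧸ Q)) := Submodule.finrank_le _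
    _ = _ := Module.finrank_prod

end Aux

/-- there are no two distinct members of the pencil `F_λ = F + λG`
(`F_∞ = G`) with `H(R/Ann F_λ)_i < H(A)_i / 2`. -/
theorem no_two_small_members {K : Type*} [Field K] [CharZero K] {r j i : ℕ}
    (hi : 0 < i) (hij : i < j)
    (F G : MvPolynomial (Fin r) K) (hF : F.IsHomogeneous j) (hG : G.IsHomogeneous j)
    (hind : LinearIndependent K ![F, G])
    (o₁ o₂ : Option K) (hne : o₁ ≠ o₂) :
    ¬ (2 * hilb (annIdeal (o₁.elim G fun c => F + c • G)) i
          < hilb (annIdeal F ⊓ annIdeal G) i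
        ∧ 2 * hilb (annIdeal (o₂.elim G fun c => F + c • G)) i
          < hilb (annIdeal F ⊓ annIdeal G) i) := by
  rintro ⟨h1, h2⟩
  haveI : FiniteDimensional K (homogeneousSubmodule (Fin r) K i) :=
    homogeneousSubmodule_finiteDimensional i
  have key := ann_inf_pencil F G o₁ o₂ hne
  have hle : hilb (annIdeal F ⊓ annIdeal G) i
      ≤ hilb (annIdeal (o₁.elim G fun c => F + c • G)) i
        + hilb (annIdeal (o₂.elim G fun c => F + c • G)) i := by
    rw [← key]
    unfold hilb
    rw [idealPiece_inf]
    exact finrank_quot_inf_le _ _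
  omega
end
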